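/- Let n, m ≥ 2 be natural numbers, b a nonnegative integer, and c ≥ 1 a natural number such that for every prime p dividing c there exists a natural number k ≥ 1 with p^k ≥ 3, φ(p^k) ∣ n, and m ≤ p^k − 1. Then the equation x_1^n + ⋯ + x_m^n = b·c^n has a solution in positive integers if and only if the equation x_1^n + ⋯ + x_m^n = b has a solution in positive integers. -/

import Mathlib

private lemma key_mod (p k n m : ℕ) (hp : p.Prime) (hk : 1 ≤ k) (h3 : 3 ≤ p ^ k)
    (hφ : Nat.totient (p ^ k) ∣ n) (hmn : m ≤ p ^ k - 1) (hn : 1 ≤ n)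
    (x : Fin m → ℕ) (hdvd : p ^ k ∣ ∑ i, x i ^ n) : ∀ i, p ∣ x i := by
  set N := p ^ k with hN
  have hN1 : 1 < N := by omega
  have : NeZero N := ⟨by omega⟩
  -- k ≤ n
  have hφpos : 0 < N.totient := Nat.totient_pos.mpr (by omega)
  have hφle : N.totient ≤ n := Nat.le_of_dvd (by omega) hφ
  have hkφ : k ≤ N.totient := by
    rw [hN, Nat.totient_prime_pow hp hk]
    have h1 : k - 1 < 2 ^ (k - 1) := Nat.lt_two_pow_self
    have h2 : 2 ^ (k - 1) ≤ p ^ (k - 1) := Nat.pow_le_pow_left hp.two_le _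
    have h3 : 1 ≤ p - 1 := by have := hp.two_le; omega
    calc k ≤ p ^ (k - 1) := by omega
      _ ≤ p ^ (k - 1) * (p - 1) := Nat.le_mul_of_pos_right _ (by omega)
  have hkn : k ≤ n := le_trans hkφ hφle
  -- each power is 0 or 1 in ZMod N
  have hpow : ∀ i : Fin m, ((x i ^ n : ℕ) : ZMod N) = if p ∣ x i then 0 else 1 := by
    intro i
    by_cases h : p ∣ x i
    · simp only [h, if_true]
      rw [ZMod.natCast_eq_zero_iff]
      exact dvd_trans (pow_dvd_pow p hkn) (pow_dvd_pow_of_dvd h n)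
    · simp only [h, if_false]
      have hcop : Nat.Coprime (x i) N :=
        Nat.Coprime.pow_right k (((hp.coprime_iff_not_dvd).mpr h).symm)
      obtain ⟨t, ht⟩ := hφ
      have hmod : x i ^ n ≡ 1 [MOD N] := by
        calc x i ^ n = (x i ^ N.totient) ^ t := by rw [← pow_mul, ← ht]
          _ ≡ 1 ^ t [MOD N] := Nat.ModEq.pow t (Nat.ModEq.pow_totient hcop)
          _ = 1 := one_pow t
      have := (ZMod.natCast_eq_natCast_iff _ _ _).mpr hmod
      simpa using this
  -- the sum in ZMod N counts non-divisible indices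
  set S := Finset.univ.filter (fun i : Fin m => ¬ p ∣ x i) with hS
  have hsum : ((∑ i, x i ^ n : ℕ) : ZMod N) = (S.card : ZMod N) := by
    rw [Nat.cast_sum]
    rw [Finset.sum_congr rfl (fun i _ => hpow i)]
    rw [Finset.sum_ite, Finset.sum_const, Finset.sum_const]
    simp [hS]
  have h0 : ((∑ i, x i ^ n : ℕ) : ZMod N) = 0 :=
    (ZMod.natCast_eq_zero_iff _ _).mpr hdvd
  rw [h0] at hsum
  have hcard : N ∣ S.card := (ZMod.natCast_eq_zero_iff _ _).mp hsum.symm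
  have hcardle : S.card ≤ m := le_trans (Finset.card_filter_le _ _) (by simp)
  have hzero : S.card = 0 := Nat.eq_zero_of_dvd_of_lt hcard (by omega)
  intro i
  by_contra h
  have : i ∈ S := by simp [hS, h]
  rw [Finset.card_eq_zero.mp hzero] at this
  simp at this

theorem stmt_16 (n m b c : ℕ) (hn : 2 ≤ n) (hm : 2 ≤ m) (hc : 1 ≤ c)
    (hφ : ∀ p : ℕ, p.Prime → p ∣ c →
      ∃ k : ℕ, 1 ≤ k ∧ 3 ≤ p ^ k ∧ Nat.totient (p ^ k) ∣ n ∧ m ≤ p ^ k - 1) :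
    (∃ x : Fin m → ℕ, (∀ i, 0 < x i) ∧ ∑ i, x i ^ n = b * c ^ n) ↔
    (∃ x : Fin m → ℕ, (∀ i, 0 < x i) ∧ ∑ i, x i ^ n = b) := by
  constructor
  · -- descent by strong induction on c
    clear hm
    induction c using Nat.strong_induction_on with
    | _ c IH =>
      intro ⟨x, hx, hsum⟩
      rcases eq_or_lt_of_le hc with hc1 | hc1
      · exact ⟨x, hx, by rw [hsum, ← hc1, one_pow, mul_one]⟩
      · have hcne : c ≠ 1 := by omega
        set p := c.minFac with hpdef
        have hp : p.Prime := Nat.minFac_prime hcne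
        have hpc : p ∣ c := Nat.minFac_dvd c
        obtain ⟨k, hk1, hk3, hkφ, hkm⟩ := hφ p hp hpc
        -- k ≤ n
        have hφle : (p ^ k).totient ≤ n := Nat.le_of_dvd (by omega) hkφ
        have hkφ2 : k ≤ (p ^ k).totient := by
          rw [Nat.totient_prime_pow hp hk1]
          have h1 : k - 1 < 2 ^ (k - 1) := Nat.lt_two_pow_self
          have h2 : 2 ^ (k - 1) ≤ p ^ (k - 1) := Nat.pow_le_pow_left hp.two_le _
          have h3 : 1 ≤ p - 1 := by have := hp.two_le; omega
          calc k ≤ p ^ (k - 1) := by omega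
            _ ≤ p ^ (k - 1) * (p - 1) := Nat.le_mul_of_pos_right _ (by omega)
        have hkn : k ≤ n := le_trans hkφ2 hφle
        have hdvd : p ^ k ∣ ∑ i, x i ^ n := by
          rw [hsum]
          exact Dvd.dvd.mul_left
            (dvd_trans (pow_dvd_pow p hkn) (pow_dvd_pow_of_dvd hpc n)) b
        have hpall : ∀ i, p ∣ x i :=
          key_mod p k n m hp hk1 hk3 hkφ hkm (by omega) x hdvd
        set y : Fin m → ℕ := fun i => x i / p with hy
        have hxy : ∀ i, x i = p * y i := fun i => (Nat.mul_div_cancel' (hpall i)).symm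
        have hypos : ∀ i, 0 < y i := by
          intro i
          by_contra h
          have h0 : y i = 0 := by omega
          have := hx i
          rw [hxy i, h0, mul_zero] at this
          omega
        obtain ⟨c', hc'⟩ := hpc
        have hc'pos : 0 < c' := by
          rcases Nat.eq_zero_or_pos c' with h | h
          · rw [h, mul_zero] at hc'; omega
          · exact h
        have hc'lt : c' < c := by
          have := hp.two_le
          nlinarith
        have hsum' : ∑ i, y i ^ n = b * c' ^ n := by
          have : ∑ i, x i ^ n = p ^ n * ∑ i, y i ^ n := by
            rw [Finset.mul_sum]
            exact Finset.sum_congr rfl (fun i _ => by rw [hxy i, mul_pow])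
          rw [this, hc', mul_pow] at hsum
          have hppos : 0 < p ^ n := pow_pos hp.pos n
          have : p ^ n * ∑ i, y i ^ n = p ^ n * (b * c' ^ n) := by ring_nf; ring_nf at hsum; linarith
          exact Nat.eq_of_mul_eq_mul_left hppos this
        exact IH c' hc'lt hc'pos
          (fun q hq hqc => hφ q hq (hqc.trans ⟨p, by rw [hc', mul_comm]⟩))
          ⟨y, hypos, hsum'⟩
  · rintro ⟨x, hx, hsum⟩
    refine ⟨fun i => c * x i, fun i => Nat.mul_pos (by omega) (hx i), ?_⟩
    simp_rw [mul_pow, ← Finset.mul_sum, hsum, mul_comm]
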